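/- Let D ⊆ ℝ², let p be an interior point of D, and let f : D → ℝ have continuous partial derivatives of first and second order in an open neighborhood of p. If ∇f(p) = 0 and the Hessian form Q_p of f at p is indefinite, then f has a strict saddle point at p. -/

import Mathlib

open Set Filter Topology

/-- `γ : [a, b] → D` is a regular path in `D`: it is continuous on `[a, b]`, maps `[a, b]`
into `D`, is differentiable on `(a, b)`, and its derivative is nonvanishing on `(a, b)`. -/
def IsRegularPath (D : Set (ℝ × ℝ)) (γ : ℝ → ℝ × ℝ) (a b : ℝ) : Prop :=
  a < b ∧ ContinuousOn γ (Set.Icc a b) ∧ Set.MapsTo γ (Set.Icc a b) D ∧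
    ∀ t ∈ Set.Ioo a b, DifferentiableAt ℝ γ t ∧ deriv γ t ≠ 0

/-- A function of one real variable has a strict local maximum at `t`. -/
def IsStrictLocalMax (g : ℝ → ℝ) (t : ℝ) : Prop :=
  ∀ᶠ s in 𝓝[≠] t, g s < g t

/-- A function of one real variable has a strict local minimum at `t`. -/
def IsStrictLocalMin (g : ℝ → ℝ) (t : ℝ) : Prop :=
  ∀ᶠ s in 𝓝[≠] t, g t < g s

/-- `f` has a saddle point at `p`: there are regular paths `γ₁, γ₂` in `D` passing through `p`
and intersecting transversally at `p` (their tangent vectors at `p` are not multiples of each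
other) such that `f` has a local maximum at `p` along `γ₁` and a local minimum at `p`
along `γ₂`. -/
def HasSaddleAt (D : Set (ℝ × ℝ)) (f : ℝ × ℝ → ℝ) (p : ℝ × ℝ) : Prop :=
  ∃ (a₁ b₁ a₂ b₂ t₁ t₂ : ℝ) (γ₁ γ₂ : ℝ → ℝ × ℝ),
    IsRegularPath D γ₁ a₁ b₁ ∧ IsRegularPath D γ₂ a₂ b₂ ∧
    t₁ ∈ Set.Ioo a₁ b₁ ∧ t₂ ∈ Set.Ioo a₂ b₂ ∧ γ₁ t₁ = p ∧ γ₂ t₂ = p ∧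
    (∀ c : ℝ, deriv γ₁ t₁ ≠ c • deriv γ₂ t₂) ∧
    (∀ c : ℝ, deriv γ₂ t₂ ≠ c • deriv γ₁ t₁) ∧
    IsLocalMax (f ∘ γ₁) t₁ ∧ IsLocalMin (f ∘ γ₂) t₂

/-- `f` has a strict saddle point at `p`: as for a saddle point, but with a strict local
maximum along `γ₁` and a strict local minimum along `γ₂`. -/
def HasStrictSaddleAt (D : Set (ℝ × ℝ)) (f : ℝ × ℝ → ℝ) (p : ℝ × ℝ) : Prop :=
  ∃ (a₁ b₁ a₂ b₂ t₁ t₂ : ℝ) (γ₁ γ₂ : ℝ → ℝ × ℝ),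
    IsRegularPath D γ₁ a₁ b₁ ∧ IsRegularPath D γ₂ a₂ b₂ ∧
    t₁ ∈ Set.Ioo a₁ b₁ ∧ t₂ ∈ Set.Ioo a₂ b₂ ∧ γ₁ t₁ = p ∧ γ₂ t₂ = p ∧
    (∀ c : ℝ, deriv γ₁ t₁ ≠ c • deriv γ₂ t₂) ∧
    (∀ c : ℝ, deriv γ₂ t₂ ≠ c • deriv γ₁ t₁) ∧
    IsStrictLocalMax (f ∘ γ₁) t₁ ∧ IsStrictLocalMin (f ∘ γ₂) t₂

/-- The second partial derivative `f_xx` at `p`. -/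
noncomputable def fxx (f : ℝ × ℝ → ℝ) (p : ℝ × ℝ) : ℝ :=
  fderiv ℝ (fun q => fderiv ℝ f q (1, 0)) p (1, 0)

/-- The mixed second partial derivative `f_xy` at `p`. -/
noncomputable def fxy (f : ℝ × ℝ → ℝ) (p : ℝ × ℝ) : ℝ :=
  fderiv ℝ (fun q => fderiv ℝ f q (1, 0)) p (0, 1)

/-- The second partial derivative `f_yy` at `p`. -/
noncomputable def fyy (f : ℝ × ℝ → ℝ) (p : ℝ × ℝ) : ℝ :=
  fderiv ℝ (fun q => fderiv ℝ f q (0, 1)) p (0, 1)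

/-- The Hessian form `Q_p(h) = f_xx(p) h₁² + 2 f_xy(p) h₁ h₂ + f_yy(p) h₂²` of `f` at `p`. -/
noncomputable def hessianForm (f : ℝ × ℝ → ℝ) (p h : ℝ × ℝ) : ℝ :=
  fxx f p * h.1 ^ 2 + 2 * fxy f p * h.1 * h.2 + fyy f p * h.2 ^ 2

section Aux

open Set Filter Topology

private lemma slope_max_aux (g g' : ℝ → ℝ) (δ : ℝ) (hδ : 0 < δ)
    (hg : ∀ t ∈ Set.Ioo (-δ) δ, HasDerivAt g (g' t) t)
    (h0 : g' 0 = 0) {c : ℝ} (h2 : HasDerivAt g' c 0) (hc : c < 0) :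
    IsStrictLocalMax g 0 := by
  have hslope : Tendsto (slope g' 0) (𝓝[≠] (0:ℝ)) (𝓝 c) :=
    hasDerivAt_iff_tendsto_slope.mp h2
  have hev : ∀ᶠ t in 𝓝[≠] (0:ℝ), slope g' 0 t < 0 :=
    hslope.eventually_lt_const hc
  obtain ⟨ε, hε, hsub⟩ := Metric.mem_nhdsWithin_iff.mp hev
  set r := min (ε / 2) (δ / 2) with hrdef
  have hr0 : 0 < r := lt_min (by linarith) (by linarith)
  have hrε : r < ε := lt_of_le_of_lt (min_le_left _ _) (by linarith)
  have hrδ : r < δ := lt_of_le_of_lt (min_le_right _ _) (by linarith)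
  have hkey : ∀ t : ℝ, t ≠ 0 → |t| < ε → g' t / t < 0 := by
    intro t ht htε
    have hmem : t ∈ Metric.ball (0:ℝ) ε ∩ {(0:ℝ)}ᶜ := by
      simp [Metric.mem_ball, Real.dist_eq, htε, ht]
    have := hsub hmem
    simp only [Set.mem_setOf_eq, slope_def_field] at this
    rw [h0] at this
    simpa using this
  have hneg : ∀ t ∈ Set.Ioo (0:ℝ) r, g' t < 0 := by
    intro t ht
    have h := hkey t (ne_of_gt ht.1) (by rw [abs_of_pos ht.1]; linarith [ht.2])
    rcases div_neg_iff.mp h with ⟨h1, h2'⟩ | ⟨h1, h2'⟩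
    · linarith [ht.1]
    · exact h1
  have hpos : ∀ t ∈ Set.Ioo (-r) (0:ℝ), 0 < g' t := by
    intro t ht
    have h := hkey t (ne_of_lt ht.2) (by rw [abs_of_neg ht.2]; linarith [ht.1])
    rcases div_neg_iff.mp h with ⟨h1, h2'⟩ | ⟨h1, h2'⟩
    · exact h1
    · linarith [ht.2]
  have hIccδ : ∀ x ∈ Set.Icc (-r) r, x ∈ Set.Ioo (-δ) δ := fun x hx =>
    ⟨by linarith [hx.1], by linarith [hx.2]⟩
  have hcont : ContinuousOn g (Set.Icc (-r) r) := fun x hx =>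
    ((hg x (hIccδ x hx)).continuousAt).continuousWithinAt
  have hanti : StrictAntiOn g (Set.Icc 0 r) := by
    apply strictAntiOn_of_deriv_neg (convex_Icc 0 r)
      (hcont.mono (Set.Icc_subset_Icc (by linarith) le_rfl))
    intro x hx
    rw [interior_Icc] at hx
    rw [(hg x (hIccδ x ⟨by linarith [hx.1], le_of_lt hx.2⟩)).deriv]
    exact hneg x hx
  have hmono : StrictMonoOn g (Set.Icc (-r) 0) := by
    apply strictMonoOn_of_deriv_pos (convex_Icc (-r) 0)
      (hcont.mono (Set.Icc_subset_Icc le_rfl (by linarith)))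
    intro x hx
    rw [interior_Icc] at hx
    rw [(hg x (hIccδ x ⟨le_of_lt hx.1, by linarith [hx.2]⟩)).deriv]
    exact hpos x hx
  show ∀ᶠ s in 𝓝[≠] (0:ℝ), g s < g 0
  filter_upwards [mem_nhdsWithin_of_mem_nhds (Ioo_mem_nhds (neg_lt_zero.mpr hr0) hr0),
    self_mem_nhdsWithin] with s hs hsne
  simp only [Set.mem_compl_iff, Set.mem_singleton_iff] at hsne
  rcases lt_or_gt_of_ne hsne with h | h
  · exact hmono ⟨le_of_lt hs.1, le_of_lt h⟩ ⟨by linarith, le_rfl⟩ h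
  · exact hanti ⟨le_rfl, by linarith⟩ ⟨le_of_lt h, le_of_lt hs.2⟩ h

private lemma slope_min_aux (g g' : ℝ → ℝ) (δ : ℝ) (hδ : 0 < δ)
    (hg : ∀ t ∈ Set.Ioo (-δ) δ, HasDerivAt g (g' t) t)
    (h0 : g' 0 = 0) {c : ℝ} (h2 : HasDerivAt g' c 0) (hc : 0 < c) :
    IsStrictLocalMin g 0 := by
  have hmax : IsStrictLocalMax (fun t => -g t) 0 :=
    slope_max_aux (fun t => -g t) (fun t => -g' t) δ hδ
      (fun t ht => (hg t ht).neg) (by simp [h0]) h2.neg (by linarith)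
  have hmax' : ∀ᶠ s in 𝓝[≠] (0:ℝ), -g s < -g 0 := hmax
  show ∀ᶠ s in 𝓝[≠] (0:ℝ), g 0 < g s
  filter_upwards [hmax'] with s hs
  linarith

private lemma hessian_smul (f : ℝ × ℝ → ℝ) (p : ℝ × ℝ) (c : ℝ) (w : ℝ × ℝ) :
    hessianForm f p (c • w) = c ^ 2 * hessianForm f p w := by
  simp only [hessianForm, Prod.smul_fst, Prod.smul_snd, smul_eq_mul]
  ring

private lemma line_data (U : Set (ℝ × ℝ)) (p : ℝ × ℝ) (f : ℝ × ℝ → ℝ)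
    (hU : IsOpen U) (hpU : p ∈ U) (hf : ContDiffOn ℝ 2 f U)
    (hgrad : fderiv ℝ f p = 0) (w : ℝ × ℝ) :
    ∃ δ > (0:ℝ), (∀ t ∈ Set.Icc (-δ) δ, p + t • w ∈ U) ∧
      (∀ t ∈ Set.Ioo (-δ) δ,
        HasDerivAt (fun s => f (p + s • w)) (fderiv ℝ f (p + t • w) w) t) ∧
      (fun t : ℝ => fderiv ℝ f (p + t • w) w) 0 = 0 ∧
      HasDerivAt (fun t : ℝ => fderiv ℝ f (p + t • w) w) (hessianForm f p w) 0 := by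
  obtain ⟨ε, hε, hball⟩ := Metric.isOpen_iff.mp hU p hpU
  set δ := ε / (2 * (‖w‖ + 1)) with hδdef
  have hw0 : (0:ℝ) ≤ ‖w‖ := norm_nonneg w
  have hδ0 : 0 < δ := by positivity
  have hmem : ∀ t ∈ Set.Icc (-δ) δ, p + t • w ∈ U := by
    intro t ht
    apply hball
    rw [Metric.mem_ball, dist_eq_norm, add_sub_cancel_left, norm_smul, Real.norm_eq_abs]
    have habs : |t| ≤ δ := abs_le.mpr ⟨ht.1, ht.2⟩
    have h1 : |t| * ‖w‖ ≤ δ * ‖w‖ := mul_le_mul_of_nonneg_right habs hw0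
    have h2 : δ * ‖w‖ < ε := by
      rw [hδdef, div_mul_eq_mul_div, div_lt_iff₀ (by positivity)]
      nlinarith
    linarith
  have hline : ∀ t : ℝ, HasDerivAt (fun s : ℝ => p + s • w) w t := by
    intro t
    simpa using ((hasDerivAt_id t).smul_const w).const_add p
  refine ⟨δ, hδ0, hmem, ?_, ?_, ?_⟩
  · intro t ht
    have hy : p + t • w ∈ U := hmem t ⟨le_of_lt ht.1, le_of_lt ht.2⟩
    have hfd : HasFDerivAt f (fderiv ℝ f (p + t • w)) (p + t • w) :=
      (((hf.contDiffAt (hU.mem_nhds hy)).differentiableAt two_ne_zero)).hasFDerivAt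
    exact hfd.comp_hasDerivAt t (hline t)
  · simp [hgrad]
  · have hcp : ContDiffAt ℝ 2 f p := hf.contDiffAt (hU.mem_nhds hpU)
    have hF : ContDiffAt ℝ 1 (fderiv ℝ f) p := hcp.fderiv_right (by norm_num)
    have hFd : DifferentiableAt ℝ (fderiv ℝ f) p := hF.differentiableAt one_ne_zero
    set B := fderiv ℝ (fderiv ℝ f) p with hBdef
    have hB : HasFDerivAt (fderiv ℝ f) B p := hFd.hasFDerivAt
    have h0p : p + (0:ℝ) • w = p := by simp
    have hB' : HasFDerivAt (fderiv ℝ f) B (p + (0:ℝ) • w) := by rw [h0p]; exact hB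
    have hcomp : HasDerivAt (fun t : ℝ => fderiv ℝ f (p + t • w)) (B w) 0 :=
      hB'.comp_hasDerivAt 0 (hline 0)
    have happ : HasDerivAt (fun t : ℝ => fderiv ℝ f (p + t • w) w) ((B w) w) 0 := by
      have := (ContinuousLinearMap.apply ℝ ℝ w).hasFDerivAt.comp_hasDerivAt 0 hcomp
      exact this
    have hsymm : ∀ a b : ℝ × ℝ, B a b = B b a := hcp.isSymmSndFDerivAt (by simp)
    -- identify fxx, fxy, fyy with entries of B
    have hentry : ∀ e : ℝ × ℝ, fderiv ℝ (fun q => fderiv ℝ f q e) p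
        = (ContinuousLinearMap.apply ℝ ℝ e).comp B := by
      intro e
      exact ((ContinuousLinearMap.apply ℝ ℝ e).hasFDerivAt.comp p hB).fderiv
    have hxx : fxx f p = B (1, 0) (1, 0) := by
      rw [fxx, hentry (1, 0)]; rfl
    have hxy : fxy f p = B (0, 1) (1, 0) := by
      rw [fxy, hentry (1, 0)]; rfl
    have hyy : fyy f p = B (0, 1) (0, 1) := by
      rw [fyy, hentry (0, 1)]; rfl
    have hwex : w = w.1 • ((1:ℝ), (0:ℝ)) + w.2 • ((0:ℝ), (1:ℝ)) := by
      ext <;> simp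
    have hexp : (B w) w = hessianForm f p w := by
      conv_lhs => rw [hwex]
      rw [hessianForm, hxx, hxy, hyy]
      simp only [map_add, map_smul, ContinuousLinearMap.add_apply,
        ContinuousLinearMap.smul_apply, smul_eq_mul]
      rw [hsymm (1, 0) (0, 1)]
      ring
    rw [← hexp]
    exact happ

end Aux

/-- If `f` has continuous first and second order partial derivatives on an open
neighborhood `U ⊆ D` of the interior point `p`, `∇f(p) = 0`, and the Hessian form of `f`
at `p` is indefinite, then `f` has a strict saddle point at `p`. -/
theorem indefinite_hessian_implies_strict_saddle (D U : Set (ℝ × ℝ)) (p : ℝ × ℝ)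
    (f : ℝ × ℝ → ℝ) (hp : p ∈ interior D) (hU : IsOpen U) (hpU : p ∈ U) (hUD : U ⊆ D)
    (hf : ContDiffOn ℝ 2 f U) (hgrad : fderiv ℝ f p = 0)
    (hindef : ∃ u v : ℝ × ℝ, 0 < hessianForm f p u ∧ hessianForm f p v < 0) :
    HasStrictSaddleAt D f p := by
  obtain ⟨u, v, hu, hv⟩ := hindef
  have hu0 : u ≠ 0 := by
    intro h; rw [h] at hu; simp [hessianForm] at hu
  have hv0 : v ≠ 0 := by
    intro h; rw [h] at hv; simp [hessianForm] at hv
  obtain ⟨δ₁, hδ₁, hmem₁, hderiv₁, h0₁, h2₁⟩ := line_data U p f hU hpU hf hgrad v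
  obtain ⟨δ₂, hδ₂, hmem₂, hderiv₂, h0₂, h2₂⟩ := line_data U p f hU hpU hf hgrad u
  have hmax : IsStrictLocalMax (fun t => f (p + t • v)) 0 :=
    slope_max_aux _ _ δ₁ hδ₁ hderiv₁ h0₁ h2₁ hv
  have hmin : IsStrictLocalMin (fun t => f (p + t • u)) 0 :=
    slope_min_aux _ _ δ₂ hδ₂ hderiv₂ h0₂ h2₂ hu
  have hline : ∀ (w : ℝ × ℝ) (t : ℝ), HasDerivAt (fun s : ℝ => p + s • w) w t := by
    intro w t
    simpa using ((hasDerivAt_id t).smul_const w).const_add p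
  have hderivγ : ∀ (w : ℝ × ℝ) (t : ℝ), deriv (fun s : ℝ => p + s • w) t = w :=
    fun w t => (hline w t).deriv
  have hreg : ∀ (w : ℝ × ℝ), w ≠ 0 → ∀ δ : ℝ, 0 < δ →
      (∀ t ∈ Set.Icc (-δ) δ, p + t • w ∈ U) →
      IsRegularPath D (fun s : ℝ => p + s • w) (-δ) δ := by
    intro w hw δ hδ hmem
    refine ⟨by linarith, ?_, ?_, ?_⟩
    · exact (Continuous.continuousOn (by continuity))
    · exact fun t ht => hUD (hmem t ht)
    · intro t ht
      exact ⟨(hline w t).differentiableAt, by rw [hderivγ w t]; exact hw⟩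
  refine ⟨-δ₁, δ₁, -δ₂, δ₂, 0, 0, fun s : ℝ => p + s • v, fun s : ℝ => p + s • u,
    hreg v hv0 δ₁ hδ₁ hmem₁, hreg u hu0 δ₂ hδ₂ hmem₂,
    ⟨by linarith, hδ₁⟩, ⟨by linarith, hδ₂⟩, by simp, by simp, ?_, ?_, hmax, hmin⟩
  · intro c h
    rw [hderivγ v 0, hderivγ u 0] at h
    have := hessian_smul f p c u
    rw [← h] at this
    nlinarith [sq_nonneg c]
  · intro c h
    rw [hderivγ v 0, hderivγ u 0] at h
    have := hessian_smul f p c v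
    rw [← h] at this
    nlinarith [sq_nonneg c]
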